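/- (Fast-rate estimation bound for the Lasso under a restricted eigenvalue condition.) Let X ∈ ℝ^{n×p}, β* ∈ ℝ^p with support S of cardinality |S| ≤ s ≥ 1, ε ∈ ℝ^n, and y = Xβ* + ε. Suppose λ ≥ (2/n) max_{1≤k≤p} |⟨X_{·k}, ε⟩|, and suppose the restricted eigenvalue condition holds with constant κ > 0: for every v ∈ ℝ^p with ∑_{k∉S}|v_k| ≤ 3∑_{k∈S}|v_k|, one has (1/n)‖Xv‖₂² ≥ κ‖v‖₂². Then any global minimizer β̂ of (1/(2n))‖y − Xβ‖₂² + λ‖β‖₁ satisfies ‖β̂ − β*‖₂ ≤ 3λ√s/κ and ‖β̂ − β*‖₁ ≤ 12 λ s / κ. -/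

import Mathlib

/-- Fast-rate estimation bound for the Lasso under a restricted eigenvalue
condition: if `y = Xβ* + ε`, `β*` has support `S` with `|S| ≤ s`, `s ≥ 1`,
`λ ≥ (2/n) max_k |⟨X_{·k}, ε⟩|`, and the restricted eigenvalue condition
`(1/n)‖Xv‖₂² ≥ κ‖v‖₂²` holds with `κ > 0` for every `v` in the cone
`∑_{k∉S}|v_k| ≤ 3∑_{k∈S}|v_k|`, then any Lasso minimizer `β̂` satisfies
`‖β̂ - β*‖₂ ≤ 3λ√s/κ` and `‖β̂ - β*‖₁ ≤ 12λs/κ`. -/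
theorem lasso_fast_rate
    (n p : ℕ) (hn : 0 < n)
    (X : Matrix (Fin n) (Fin p) ℝ) (βstar : Fin p → ℝ) (ε : Fin n → ℝ)
    (y : Fin n → ℝ) (hy : y = X.mulVec βstar + ε)
    (S : Finset (Fin p)) (hS : ∀ k, k ∈ S ↔ βstar k ≠ 0)
    (s : ℕ) (hs : 1 ≤ s) (hcard : S.card ≤ s)
    (lam : ℝ) (hlam : 0 < lam)
    (hlam_ge : ∀ k : Fin p, (2 / n) * |∑ i, X i k * ε i| ≤ lam)
    (κ : ℝ) (hκ : 0 < κ)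
    (hRE : ∀ v : Fin p → ℝ,
      (∑ k ∈ Sᶜ, |v k| ≤ 3 * ∑ k ∈ S, |v k|) →
      κ * ∑ k, (v k) ^ 2 ≤ (1 / n) * ∑ i, (X.mulVec v i) ^ 2)
    (βhat : Fin p → ℝ)
    (hmin : ∀ β : Fin p → ℝ,
      (1 / (2 * n)) * ∑ i, (y i - X.mulVec βhat i) ^ 2 + lam * ∑ k, |βhat k|
        ≤ (1 / (2 * n)) * ∑ i, (y i - X.mulVec β i) ^ 2 + lam * ∑ k, |β k|) :
    Real.sqrt (∑ k, (βhat k - βstar k) ^ 2) ≤ 3 * lam * Real.sqrt s / κ ∧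
    ∑ k, |βhat k - βstar k| ≤ 12 * lam * s / κ := by
  have hnr : (0:ℝ) < (n:ℝ) := by exact_mod_cast hn
  set v : Fin p → ℝ := fun k => βhat k - βstar k with hv
  set w : Fin n → ℝ := X.mulVec v with hw
  set c : Fin p → ℝ := fun k => ∑ i, X i k * ε i with hc
  set a : ℝ := ∑ k ∈ S, |v k| with ha
  set b : ℝ := ∑ k ∈ Sᶜ, |v k| with hb
  have ha0 : 0 ≤ a := Finset.sum_nonneg fun k _ => abs_nonneg _
  have hb0 : 0 ≤ b := Finset.sum_nonneg fun k _ => abs_nonneg _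
  -- residual identity
  have hres : ∀ i, y i - X.mulVec βhat i = ε i - w i := by
    intro i
    have : w = X.mulVec βhat - X.mulVec βstar := by
      rw [hw, ← Matrix.mulVec_sub]; rfl
    rw [hy, this]; simp [Pi.add_apply, Pi.sub_apply]; ring
  -- expansion
  have hexp : ∑ i, (ε i - w i) ^ 2
      = ∑ i, (ε i) ^ 2 - 2 * (∑ i, ε i * w i) + ∑ i, (w i) ^ 2 := by
    rw [Finset.mul_sum, ← Finset.sum_sub_distrib, ← Finset.sum_add_distrib]
    exact Finset.sum_congr rfl fun i _ => by ring
  -- swap sums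
  have hswap : ∑ i, ε i * w i = ∑ k, v k * c k := by
    simp only [hw, Matrix.mulVec, dotProduct, hc, Finset.mul_sum]
    rw [Finset.sum_comm]
    exact Finset.sum_congr rfl fun k _ => Finset.sum_congr rfl fun i _ => by ring
  -- bound on correlation term
  have hT : (∑ k, v k * c k) ≤ ((n:ℝ) * lam / 2) * (a + b) := by
    have h1 : ∀ k : Fin p, v k * c k ≤ |v k| * ((n:ℝ) * lam / 2) := by
      intro k
      have h2 : |c k| ≤ (n:ℝ) * lam / 2 := by
        have h := hlam_ge k
        rw [div_mul_eq_mul_div, div_le_iff₀ hnr] at h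
        have hck : |c k| = |∑ i, X i k * ε i| := by rw [hc]
        rw [hck]; linarith
      calc v k * c k ≤ |v k * c k| := le_abs_self _
        _ = |v k| * |c k| := abs_mul _ _
        _ ≤ |v k| * ((n:ℝ) * lam / 2) := by
            exact mul_le_mul_of_nonneg_left h2 (abs_nonneg _)
    calc (∑ k, v k * c k) ≤ ∑ k, |v k| * ((n:ℝ) * lam / 2) :=
          Finset.sum_le_sum fun k _ => h1 k
      _ = ((n:ℝ) * lam / 2) * (∑ k, |v k|) := by rw [← Finset.sum_mul]; ring
      _ = ((n:ℝ) * lam / 2) * (a + b) := by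
          rw [ha, hb, Finset.sum_add_sum_compl]
  have hsplit1 : ∑ k, |v k| = a + b := by rw [ha, hb, Finset.sum_add_sum_compl]
  -- penalty difference bound
  have hD : (∑ k, |βstar k|) - (∑ k, |βhat k|) ≤ a - b := by
    have e1 : ∑ k, |βstar k| = ∑ k ∈ S, |βstar k| := by
      rw [← Finset.sum_add_sum_compl S]
      have : ∑ k ∈ Sᶜ, |βstar k| = 0 := by
        apply Finset.sum_eq_zero
        intro k hk
        have : βstar k = 0 := by
          by_contra h
          exact (Finset.mem_compl.mp hk) ((hS k).mpr h)
        simp [this]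
      rw [this, add_zero]
    have e2 : ∑ k, |βhat k| = ∑ k ∈ S, |βhat k| + ∑ k ∈ Sᶜ, |v k| := by
      rw [← Finset.sum_add_sum_compl S]
      congr 1
      apply Finset.sum_congr rfl
      intro k hk
      have : βstar k = 0 := by
        by_contra h
        exact (Finset.mem_compl.mp hk) ((hS k).mpr h)
      simp [hv, this]
    rw [e1, e2]
    have e3 : ∑ k ∈ S, |βstar k| - ∑ k ∈ S, |βhat k| ≤ a := by
      rw [ha, ← Finset.sum_sub_distrib]
      apply Finset.sum_le_sum
      intro k _
      calc |βstar k| - |βhat k| ≤ |βstar k - βhat k| := abs_sub_abs_le_abs_sub _ _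
        _ = |v k| := by rw [hv]; exact abs_sub_comm _ _
    rw [hb]; linarith
  -- basic inequality
  have hbasic : (1 / (2 * (n:ℝ))) * (∑ i, (w i) ^ 2)
      ≤ (1 / (n:ℝ)) * (∑ k, v k * c k) + lam * ((∑ k, |βstar k|) - (∑ k, |βhat k|)) := by
    have h0 := hmin βstar
    have e1 : ∀ i, y i - X.mulVec βstar i = ε i := by
      intro i; rw [hy]; simp
    simp only [hres, e1] at h0
    rw [hexp, hswap] at h0
    have expand : (1 / (2 * (n:ℝ))) * ((∑ i, (ε i) ^ 2) - 2 * (∑ k, v k * c k) + ∑ i, (w i) ^ 2)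
        = (1 / (2 * (n:ℝ))) * (∑ i, (ε i) ^ 2) - (1 / (n:ℝ)) * (∑ k, v k * c k)
          + (1 / (2 * (n:ℝ))) * (∑ i, (w i) ^ 2) := by
      field_simp
    rw [expand] at h0
    -- combine
    linarith
  have hQ0 : (0:ℝ) ≤ ∑ i, (w i) ^ 2 := Finset.sum_nonneg fun i _ => sq_nonneg _
  -- combine: (1/(2n)) Q ≤ (3λ/2) a - (λ/2) b
  have hkey : (1 / (2 * (n:ℝ))) * (∑ i, (w i) ^ 2) ≤ (3 * lam / 2) * a - (lam / 2) * b := by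
    have h1 : (1 / (n:ℝ)) * (∑ k, v k * c k) ≤ (lam / 2) * (a + b) := by
      have := hT
      have h2 : (1 / (n:ℝ)) * (∑ k, v k * c k) ≤ (1 / (n:ℝ)) * (((n:ℝ) * lam / 2) * (a + b)) :=
        mul_le_mul_of_nonneg_left hT (by positivity)
      have h3 : (1 / (n:ℝ)) * (((n:ℝ) * lam / 2) * (a + b)) = (lam / 2) * (a + b) := by
        field_simp
      linarith
    have h4 : lam * ((∑ k, |βstar k|) - (∑ k, |βhat k|)) ≤ lam * (a - b) :=
      mul_le_mul_of_nonneg_left hD hlam.le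
    calc (1 / (2 * (n:ℝ))) * (∑ i, (w i) ^ 2)
        ≤ (lam / 2) * (a + b) + lam * (a - b) := by linarith [hbasic]
      _ = (3 * lam / 2) * a - (lam / 2) * b := by ring
  -- cone condition
  have hcone : b ≤ 3 * a := by
    have h1 : (0:ℝ) ≤ (1 / (2 * (n:ℝ))) * (∑ i, (w i) ^ 2) := by positivity
    nlinarith
  -- restricted eigenvalue
  have hN2 : κ * (∑ k, (v k) ^ 2) ≤ 3 * lam * a := by
    have h1 := hRE v (by rw [← ha, ← hb] at *; linarith)
    have h2 : (1 / (n:ℝ)) * (∑ i, (w i) ^ 2) = 2 * ((1 / (2 * (n:ℝ))) * (∑ i, (w i) ^ 2)) := by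
      field_simp
    have h3 : (1 / (n:ℝ)) * (∑ i, (X.mulVec v) i ^ 2) = (1 / (n:ℝ)) * (∑ i, (w i) ^ 2) := by
      rw [hw]
    push_cast at h1
    rw [h3, h2] at h1
    nlinarith [hkey, hlam.le, hb0]
  -- Cauchy-Schwarz: a ≤ √s √N2
  set N2 : ℝ := ∑ k, (v k) ^ 2 with hN2def
  have hN20 : 0 ≤ N2 := Finset.sum_nonneg fun k _ => sq_nonneg _
  set N : ℝ := Real.sqrt N2 with hNdef
  have hN0 : 0 ≤ N := Real.sqrt_nonneg _
  have hNsq : N ^ 2 = N2 := Real.sq_sqrt hN20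
  have hCS : a ≤ Real.sqrt s * N := by
    have h1 : a ^ 2 ≤ (S.card : ℝ) * ∑ k ∈ S, (v k) ^ 2 := by
      have h2 := Finset.sum_mul_sq_le_sq_mul_sq S (fun _ => (1:ℝ)) (fun k => |v k|)
      simp only [one_mul, one_pow, sq_abs] at h2
      simpa [Finset.sum_const, nsmul_eq_mul, ha] using h2
    have h3 : (∑ k ∈ S, (v k) ^ 2) ≤ N2 := by
      rw [hN2def]
      exact Finset.sum_le_sum_of_subset_of_nonneg (Finset.subset_univ S)
        (fun k _ _ => sq_nonneg _)
    have h4 : a ^ 2 ≤ (s:ℝ) * N2 := by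
      have hcc : (S.card : ℝ) ≤ (s:ℝ) := by exact_mod_cast hcard
      have hP0 : (0:ℝ) ≤ ∑ k ∈ S, (v k) ^ 2 :=
        Finset.sum_nonneg fun k _ => sq_nonneg _
      calc a ^ 2 ≤ (S.card : ℝ) * ∑ k ∈ S, (v k) ^ 2 := h1
        _ ≤ (s:ℝ) * ∑ k ∈ S, (v k) ^ 2 := mul_le_mul_of_nonneg_right hcc hP0
        _ ≤ (s:ℝ) * N2 := mul_le_mul_of_nonneg_left h3 (Nat.cast_nonneg s)
    have h5 : a = Real.sqrt (a ^ 2) := (Real.sqrt_sq ha0).symm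
    rw [h5]
    calc Real.sqrt (a ^ 2) ≤ Real.sqrt ((s:ℝ) * N2) := Real.sqrt_le_sqrt h4
      _ = Real.sqrt s * N := by rw [Real.sqrt_mul (Nat.cast_nonneg s)]
  -- main bound on N
  have hmain : N ≤ 3 * lam * Real.sqrt s / κ := by
    have h1 : κ * N ^ 2 ≤ 3 * lam * (Real.sqrt s * N) := by
      calc κ * N ^ 2 = κ * N2 := by rw [hNsq]
        _ ≤ 3 * lam * a := hN2
        _ ≤ 3 * lam * (Real.sqrt s * N) := by
            exact mul_le_mul_of_nonneg_left hCS (by positivity)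
    rcases eq_or_lt_of_le hN0 with h | h
    · rw [← h]; positivity
    · rw [le_div_iff₀ hκ]
      have h2 : (N * κ) * N ≤ (3 * lam * Real.sqrt s) * N := by
        have e1 : (N * κ) * N = κ * N ^ 2 := by ring
        have e2 : (3 * lam * Real.sqrt s) * N = 3 * lam * (Real.sqrt s * N) := by ring
        rw [e1, e2]; exact h1
      exact le_of_mul_le_mul_right h2 h
  constructor
  · exact hmain
  · -- ℓ1 bound
    have hsq : Real.sqrt s * Real.sqrt s = (s:ℝ) := Real.mul_self_sqrt (Nat.cast_nonneg s)
    have h1 : Real.sqrt s * N ≤ Real.sqrt s * (3 * lam * Real.sqrt s / κ) :=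
      mul_le_mul_of_nonneg_left hmain (Real.sqrt_nonneg _)
    have h2 : Real.sqrt s * (3 * lam * Real.sqrt s / κ) = 3 * lam * s / κ := by
      field_simp
      linear_combination hsq
    rw [hsplit1]
    calc a + b ≤ 4 * a := by linarith
      _ ≤ 4 * (Real.sqrt s * N) := by linarith
      _ ≤ 4 * (3 * lam * (s:ℝ) / κ) := by linarith [h1, h2.le]
      _ = 12 * lam * (s:ℝ) / κ := by ring
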